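/- arXiv:2601.15970 — 2 statements merged into one kernel-verified Lean document; each statement's English description precedes it below -/
import Mathlib

section
/- Let E be a finite-dimensional real inner product space, let g : E → ℝ be differentiable and strongly convex with constant μ > 0 (i.e., g(y) ≥ g(x) + ⟪∇g(x), y - x⟫ + μ‖y - x‖² for all x, y), let h : E → ℝ be convex and differentiable, and set f = g - h. Suppose f(x) ≥ f_low for all x ∈ E for some f_low ∈ ℝ. Let (x_k)_{k≥0} be DCA iterates, i.e., for every k, x_{k+1} is a global minimizer of x ↦ g(x) - ⟪∇h(x_k), x - x_k⟫. Then the series ∑_{i=0}^{∞} ‖x_{i+1} - x_i‖² is summable, with ∑_{i=0}^{∞} ‖x_{i+1} - x_i‖² ≤ (f(x₀) - f_low)/μ; in particular ‖x_{k+1} - x_k‖ → 0 as k → ∞. -/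
open RealInnerProductSpace

-- Gradient inequality for a convex differentiable function.
lemma convex_grad_ineq {E : Type*} [NormedAddCommGroup E] [InnerProductSpace ℝ E]
    [FiniteDimensional ℝ E]
    (h : E → ℝ) (hh : Differentiable ℝ h) (hconv : ConvexOn ℝ Set.univ h) (a b : E) :
    h a + ⟪gradient h a, b - a⟫ ≤ h b := by
  set d : E := b - a with hd
  -- the function t ↦ h (a + t • d) is convex on ℝ
  have haff : ConvexOn ℝ Set.univ (fun t : ℝ => h (a + t • d)) := by
    have h0 := hconv.comp_affineMap (AffineMap.lineMap a b : ℝ →ᵃ[ℝ] E)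
    have he : (h ∘ (AffineMap.lineMap a b : ℝ →ᵃ[ℝ] E)) = fun t : ℝ => h (a + t • d) := by
      funext t; simp [AffineMap.lineMap_apply, hd, add_comm]
    have hpre : (AffineMap.lineMap a b : ℝ →ᵃ[ℝ] E) ⁻¹' Set.univ = Set.univ := rfl
    rw [hpre, he] at h0
    exact h0
  have hc : HasDerivAt (fun t : ℝ => a + t • d) d 0 := by
    simpa using ((hasDerivAt_id (0:ℝ)).smul_const d).const_add a
  have hgrad : HasGradientAt h (gradient h a) a := (hh a).hasGradientAt
  have hF : HasFDerivAt h (InnerProductSpace.toDual ℝ E (gradient h a)) a := hgrad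
  have hψ : HasDerivAt (fun t : ℝ => h (a + t • d)) ⟪gradient h a, d⟫ 0 := by
    have hF0 : HasFDerivAt h (InnerProductSpace.toDual ℝ E (gradient h a))
        ((fun t : ℝ => a + t • d) 0) := by simpa using hF
    have := hF0.comp_hasDerivAt (0:ℝ) hc
    exact this.congr_deriv (by simp)
  have hs := haff.le_slope_of_hasDerivAt (Set.mem_univ 0) (Set.mem_univ 1)
    (by norm_num) hψ
  simp only [slope_def_field] at hs
  have : ⟪gradient h a, d⟫ ≤ h (a + d) - h a := by
    simpa using hs
  have hab : a + d = b := by simp [hd]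
  rw [hab] at this
  linarith

/-- For DCA iterates of a lower-bounded objective `f = g - h` with `g`
`μ`-strongly convex, the squared step lengths are summable with sum at most
`(f x₀ - f_low) / μ`; in particular the step lengths tend to zero. -/
theorem dca_steps_square_summable
    {E : Type*} [NormedAddCommGroup E] [InnerProductSpace ℝ E] [FiniteDimensional ℝ E]
    (g h : E → ℝ) (μ : ℝ) (hμ : 0 < μ)
    (hg : Differentiable ℝ g)
    (hsc : ∀ x y : E, g y ≥ g x + ⟪gradient g x, y - x⟫ + μ * ‖y - x‖ ^ 2)
    (hh : Differentiable ℝ h) (hconv : ConvexOn ℝ Set.univ h)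
    (flow : ℝ) (hflow : ∀ x : E, g x - h x ≥ flow)
    (x : ℕ → E)
    (hmin : ∀ k : ℕ, ∀ y : E,
      g (x (k + 1)) - ⟪gradient h (x k), x (k + 1) - x k⟫ ≤
        g y - ⟪gradient h (x k), y - x k⟫) :
    Summable (fun i : ℕ => ‖x (i + 1) - x i‖ ^ 2) ∧
    (∑' i : ℕ, ‖x (i + 1) - x i‖ ^ 2) ≤ ((g (x 0) - h (x 0)) - flow) / μ ∧
    Filter.Tendsto (fun k : ℕ => ‖x (k + 1) - x k‖) Filter.atTop (nhds 0) := by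
  -- per-step descent
  have step : ∀ k : ℕ, μ * ‖x (k + 1) - x k‖ ^ 2 ≤
      (g (x k) - h (x k)) - (g (x (k + 1)) - h (x (k + 1))) := by
    intro k
    set v : E := gradient h (x k) with hv
    set xs : E := x (k + 1) with hxs
    -- x (k+1) is a global minimizer of φ y = g y - ⟪v, y - x k⟫
    have hlocmin : IsLocalMin (fun y : E => g y - ⟪v, y - x k⟫) xs := by
      apply IsMinOn.isLocalMin _ (Filter.univ_mem)
      intro y _
      exact hmin k y
    -- derivative of φ at xs
    have hinner : HasFDerivAt (fun y : E => (⟪v, y - x k⟫ : ℝ))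
        (InnerProductSpace.toDual ℝ E v) xs := by
      have h1 : HasFDerivAt (fun y : E => (⟪v, y⟫ : ℝ))
          (InnerProductSpace.toDual ℝ E v) xs :=
        (InnerProductSpace.toDual ℝ E v).hasFDerivAt
      have h2 := h1.sub_const (⟪v, x k⟫ : ℝ)
      have : (fun y : E => (⟪v, y⟫ : ℝ) - ⟪v, x k⟫) = fun y : E => (⟪v, y - x k⟫ : ℝ) := by
        funext y; rw [inner_sub_right]
      rwa [this] at h2
    have hφ : HasFDerivAt (fun y : E => g y - ⟪v, y - x k⟫)
        (fderiv ℝ g xs - InnerProductSpace.toDual ℝ E v) xs :=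
      (hg xs).hasFDerivAt.sub hinner
    have hzero := hlocmin.hasFDerivAt_eq_zero hφ
    have hfder : fderiv ℝ g xs = InnerProductSpace.toDual ℝ E v := by
      rwa [sub_eq_zero] at hzero
    have hgradg : gradient g xs = v := by
      have : HasFDerivAt g (InnerProductSpace.toDual ℝ E v) xs := by
        rw [← hfder]; exact (hg xs).hasFDerivAt
      have := (hasGradientAt_iff_hasFDerivAt (f' := v)).mpr this
      exact this.gradient
    -- strong convexity of g at xs
    have h1 := hsc xs (x k)
    rw [hgradg] at h1
    -- convexity of h
    have h2 := convex_grad_ineq h hh hconv (x k) xs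
    rw [← hv] at h2
    have hnorm : ‖x k - xs‖ = ‖xs - x k‖ := norm_sub_rev _ _
    have hin : ⟪v, x k - xs⟫ + ⟪v, xs - x k⟫ = 0 := by
      rw [← inner_add_right]; simp
    rw [hnorm] at h1
    linarith [h1, h2, hin]
  have hnn : ∀ n : ℕ, (0:ℝ) ≤ ‖x (n + 1) - x n‖ ^ 2 := fun n => sq_nonneg _
  have hbound : ∀ n : ℕ,
      (∑ i ∈ Finset.range n, ‖x (i + 1) - x i‖ ^ 2) ≤ ((g (x 0) - h (x 0)) - flow) / μ := by
    intro n
    rw [le_div_iff₀ hμ]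
    calc (∑ i ∈ Finset.range n, ‖x (i + 1) - x i‖ ^ 2) * μ
        = ∑ i ∈ Finset.range n, μ * ‖x (i + 1) - x i‖ ^ 2 := by
          rw [Finset.sum_mul]; exact Finset.sum_congr rfl fun i _ => mul_comm _ _
      _ ≤ ∑ i ∈ Finset.range n,
            ((g (x i) - h (x i)) - (g (x (i + 1)) - h (x (i + 1)))) :=
          Finset.sum_le_sum fun i _ => step i
      _ = (g (x 0) - h (x 0)) - (g (x n) - h (x n)) :=
          Finset.sum_range_sub' (fun i => g (x i) - h (x i)) n
      _ ≤ (g (x 0) - h (x 0)) - flow := by linarith [hflow (x n)]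
  have hsum : Summable (fun i : ℕ => ‖x (i + 1) - x i‖ ^ 2) :=
    summable_of_sum_range_le hnn hbound
  refine ⟨hsum, Real.tsum_le_of_sum_range_le hnn hbound, ?_⟩
  have h0 := hsum.tendsto_atTop_zero
  have := (Real.continuous_sqrt.tendsto 0).comp h0
  simp only [Real.sqrt_zero] at this
  have heq : (Real.sqrt ∘ fun i : ℕ => ‖x (i + 1) - x i‖ ^ 2) =
      fun k : ℕ => ‖x (k + 1) - x k‖ :=
    funext fun k => Real.sqrt_sq (norm_nonneg _)
  rwa [heq] at this
end

section
/- Let E be a finite-dimensional real inner product space, let g : E → ℝ be differentiable and strongly convex with constant μ > 0 (i.e., g(y) ≥ g(x) + ⟪∇g(x), y - x⟫ + μ‖y - x‖² for all x, y), let h : E → ℝ be convex and differentiable with ∇h Lipschitz continuous with constant L_h, and set f = g - h. Suppose f(x) ≥ f_low for all x ∈ E for some f_low ∈ ℝ. Let (x_k)_{k≥0} be DCA iterates, i.e., for every k, x_{k+1} is a global minimizer of x ↦ g(x) - ⟪∇h(x_k), x - x_k⟫. Then ∇f(x_k) → 0 as k → ∞. -/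
open RealInnerProductSpace

section Aux

variable {E : Type*} [NormedAddCommGroup E] [InnerProductSpace ℝ E] [CompleteSpace E]

/-- First-order characterization of convexity: gradient inequality. -/
lemma convex_gradient_ineq (h : E → ℝ) (hh : Differentiable ℝ h)
    (hconv : ConvexOn ℝ Set.univ h) (x y : E) :
    h x + ⟪gradient h x, y - x⟫ ≤ h y := by
  set c := gradient h x with hc
  set v := y - x with hv
  set φ : ℝ → ℝ := fun t => h (t • v + x) with hφ
  have hcurve : HasDerivAt (fun t : ℝ => t • v + x) v 0 := by
    simpa using ((hasDerivAt_id (0 : ℝ)).smul_const v).add_const x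
  have hder : HasDerivAt φ ⟪c, v⟫ 0 := by
    have hf : HasFDerivAt h (InnerProductSpace.toDual ℝ E c) x :=
      (hh x).hasGradientAt.hasFDerivAt
    have hf' : HasFDerivAt h (InnerProductSpace.toDual ℝ E c) ((0 : ℝ) • v + x) := by
      simpa using hf
    have := hf'.comp_hasDerivAt 0 hcurve
    simp only [InnerProductSpace.toDual_apply_apply] at this
    exact this
  have hφconv : ConvexOn ℝ Set.univ φ := by
    have := hconv.comp_affineMap (AffineMap.lineMap x (x + v))
    have heq : (h ∘ ⇑(AffineMap.lineMap x (x + v))) = φ := by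
      funext t
      simp [AffineMap.lineMap_apply, add_sub_cancel_left, hφ]
    simpa [heq] using this
  have hslope := hφconv.le_slope_of_hasDerivAt (Set.mem_univ (0 : ℝ))
    (Set.mem_univ (1 : ℝ)) one_pos hder
  have h0 : φ 0 = h x := by simp [hφ]
  have h1 : φ 1 = h y := by simp [hφ, hv]
  rw [slope_def_field] at hslope
  simp only [h0, h1] at hslope
  have : ⟪c, v⟫ ≤ h y - h x := by
    simpa using hslope
  linarith

/-- Stationarity of the DCA subproblem: the gradient of `g` at a global
minimizer of `y ↦ g y - ⟪c, y - x0⟫` equals `c`. -/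
lemma grad_eq_of_min (g : E → ℝ) (hg : Differentiable ℝ g) (c x0 z : E)
    (hmin : ∀ y : E, g z - ⟪c, z - x0⟫ ≤ g y - ⟪c, y - x0⟫) :
    gradient g z = c := by
  set φ : E → ℝ := fun y => g y - ⟪c, y - x0⟫ with hφ
  have hloc : IsLocalMin φ z := Filter.Eventually.of_forall fun y => hmin y
  have hψ : HasFDerivAt (fun y : E => (⟪c, y - x0⟫ : ℝ))
      (InnerProductSpace.toDual ℝ E c) z := by
    have := ((InnerProductSpace.toDual ℝ E c).hasFDerivAt (x := z)).sub_const
      (⟪c, x0⟫ : ℝ)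
    convert this using 1
    · rfl
    · rfl
    funext y
    simp [inner_sub_right]
  have hder : HasFDerivAt φ
      (InnerProductSpace.toDual ℝ E (gradient g z) - InnerProductSpace.toDual ℝ E c) z :=
    ((hg z).hasGradientAt.hasFDerivAt).sub hψ
  have h0 := hloc.hasFDerivAt_eq_zero hder
  have : InnerProductSpace.toDual ℝ E (gradient g z) = InnerProductSpace.toDual ℝ E c :=
    sub_eq_zero.mp h0
  exact (InnerProductSpace.toDual ℝ E).injective this

/-- Gradient of a difference. -/
lemma gradient_sub' (g h : E → ℝ) (hg : Differentiable ℝ g) (hh : Differentiable ℝ h)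
    (x : E) :
    gradient (fun y => g y - h y) x = gradient g x - gradient h x := by
  have : HasGradientAt (fun y => g y - h y) (gradient g x - gradient h x) x := by
    rw [hasGradientAt_iff_hasFDerivAt, map_sub]
    exact ((hg x).hasGradientAt.hasFDerivAt).sub ((hh x).hasGradientAt.hasFDerivAt)
  exact this.gradient

end Aux

/-- The gradients of `f = g - h` at the DCA iterates converge to zero. -/
theorem dca_gradient_tendsto_zero
    {E : Type*} [NormedAddCommGroup E] [InnerProductSpace ℝ E] [FiniteDimensional ℝ E]
    (g h : E → ℝ) (μ L : ℝ) (hμ : 0 < μ)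
    (hg : Differentiable ℝ g)
    (hsc : ∀ x y : E, g y ≥ g x + ⟪gradient g x, y - x⟫ + μ * ‖y - x‖ ^ 2)
    (hh : Differentiable ℝ h) (hconv : ConvexOn ℝ Set.univ h)
    (hlip : ∀ x y : E, ‖gradient h x - gradient h y‖ ≤ L * ‖x - y‖)
    (flow : ℝ) (hflow : ∀ x : E, g x - h x ≥ flow)
    (x : ℕ → E)
    (hmin : ∀ k : ℕ, ∀ y : E,
      g (x (k + 1)) - ⟪gradient h (x k), x (k + 1) - x k⟫ ≤
        g y - ⟪gradient h (x k), y - x k⟫) :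
    Filter.Tendsto (fun k : ℕ => gradient (fun y => g y - h y) (x k))
      Filter.atTop (nhds 0) := by
  set F : ℕ → ℝ := fun k => g (x k) - h (x k) with hF
  set d : ℕ → ℝ := fun k => ‖x (k + 1) - x k‖ with hd
  -- stationarity
  have hstat : ∀ k, gradient g (x (k + 1)) = gradient h (x k) := fun k =>
    grad_eq_of_min g hg (gradient h (x k)) (x k) (x (k + 1)) (hmin k)
  -- descent
  have hkey : ∀ k, F (k + 1) + μ * d k ^ 2 ≤ F k := by
    intro k
    have h1 := hsc (x (k + 1)) (x k)
    rw [hstat k] at h1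
    have h2 := convex_gradient_ineq h hh hconv (x k) (x (k + 1))
    have h3 : ⟪gradient h (x k), x k - x (k + 1)⟫
        = -⟪gradient h (x k), x (k + 1) - x k⟫ := by
      rw [← neg_sub, inner_neg_right]
    have h4 : ‖x k - x (k + 1)‖ = d k := by rw [hd]; exact norm_sub_rev _ _
    rw [h3, h4] at h1
    simp only [hF]
    nlinarith [h1, h2]
  have hnonneg : ∀ k, (0 : ℝ) ≤ μ * d k ^ 2 :=
    fun k => mul_nonneg hμ.le (sq_nonneg _)
  have hanti : Antitone F := antitone_nat_of_succ_le fun k => by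
    have := hkey k; have := hnonneg k; linarith
  have hbdd : BddBelow (Set.range F) :=
    ⟨flow, by rintro _ ⟨k, rfl⟩; exact hflow (x k)⟩
  have hFlim : Filter.Tendsto F Filter.atTop (nhds (⨅ k, F k)) :=
    tendsto_atTop_ciInf hanti hbdd
  have hFshift : Filter.Tendsto (fun k => F (k + 1)) Filter.atTop (nhds (⨅ k, F k)) :=
    hFlim.comp (Filter.tendsto_add_atTop_nat 1)
  have hdiff : Filter.Tendsto (fun k => F k - F (k + 1)) Filter.atTop (nhds 0) := by
    simpa using hFlim.sub hFshift
  -- μ d² → 0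
  have hμd2 : Filter.Tendsto (fun k => μ * d k ^ 2) Filter.atTop (nhds 0) := by
    apply squeeze_zero hnonneg (fun k => ?_) hdiff
    have := hkey k; linarith
  have hd2 : Filter.Tendsto (fun k => d k ^ 2) Filter.atTop (nhds 0) := by
    have := hμd2.const_mul μ⁻¹
    simpa [mul_assoc, inv_mul_cancel_left₀ hμ.ne'] using this
  have hdlim : Filter.Tendsto d Filter.atTop (nhds 0) := by
    have hsqrt : Filter.Tendsto (fun k => Real.sqrt (d k ^ 2)) Filter.atTop (nhds 0) := by
      have := (Real.continuous_sqrt.tendsto 0).comp hd2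
      simpa [Function.comp_def] using this
    refine hsqrt.congr fun k => ?_
    exact Real.sqrt_sq (norm_nonneg _)
  -- gradient of f at x (k+1)
  have hgradf : ∀ k, gradient (fun y => g y - h y) (x (k + 1))
      = gradient h (x k) - gradient h (x (k + 1)) := by
    intro k
    rw [gradient_sub' g h hg hh, hstat k]
  have hbound : ∀ k, ‖gradient (fun y => g y - h y) (x (k + 1))‖ ≤ |L| * d k := by
    intro k
    rw [hgradf k]
    calc ‖gradient h (x k) - gradient h (x (k + 1))‖ ≤ L * ‖x k - x (k + 1)‖ :=
          hlip (x k) (x (k + 1))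
      _ = L * d k := by rw [norm_sub_rev]
      _ ≤ |L| * d k := mul_le_mul_of_nonneg_right (le_abs_self L) (norm_nonneg _)
  have hLd : Filter.Tendsto (fun k => |L| * d k) Filter.atTop (nhds 0) := by
    simpa using hdlim.const_mul |L|
  have hshift : Filter.Tendsto
      (fun k => gradient (fun y => g y - h y) (x (k + 1))) Filter.atTop (nhds 0) :=
    squeeze_zero_norm hbound hLd
  exact (Filter.tendsto_add_atTop_iff_nat 1).mp hshift
end
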